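/- arXiv:2508.15199 — 2 statements merged into one kernel-verified Lean document; each statement's English description precedes it below -/
import Mathlib

section
/- Let φ: ℝ×ℝ² → ℝ be differentiable, fix a point where ∂₁φ = ∂₂φ = 0, and set V₀ = ∂_tφ·e₃ + e₀, V₁ = ∂₁φ·e₃ + e₁, V₂ = ∂₂φ·e₃ + e₂ (these span the tangent space to the graph hypersurface {y³ = φ(t,y¹,y²)}). Then the 3×3 Gram determinant det(G(Vₐ,V_b))_{a,b=0,1,2} with respect to the acoustical metric G equals (v³ − ∂_tφ)² − c². In particular, the tangent space is degenerate (null) for G if and only if (v³ − ∂_tφ)² = c². -/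
/-- the Gram determinant of the tangent frame of the graph
hypersurface equals (v³ - ∂ₜφ)² - c², hence degeneracy iff (v³-∂ₜφ)² = c². -/
theorem graph_gram_determinant
    (c : ℝ) (hc : 0 < c) (v : Fin 3 → ℝ) (φt : ℝ)
    (G : Matrix (Fin 4) (Fin 4) ℝ)
    (hG : G =
      !![-c^2 + (v 0^2 + v 1^2 + v 2^2), -v 0, -v 1, -v 2;
         -v 0, 1, 0, 0;
         -v 1, 0, 1, 0;
         -v 2, 0, 0, 1])
    (V : Fin 3 → Fin 4 → ℝ)
    (hV : V = ![![1, 0, 0, φt], ![0, 1, 0, 0], ![0, 0, 1, 0]])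
    (Gram : Matrix (Fin 3) (Fin 3) ℝ)
    (hGram : Gram = fun a b => ∑ μ : Fin 4, ∑ ν : Fin 4, G μ ν * V a μ * V b ν) :
    Gram.det = (v 2 - φt)^2 - c^2 ∧
    (Gram.det = 0 ↔ (v 2 - φt)^2 = c^2) := by
  have key : Gram.det = (v 2 - φt)^2 - c^2 := by
    rw [Matrix.det_fin_three]
    subst hG hV hGram
    simp [Matrix.det_fin_three, Fin.sum_univ_four, Matrix.cons_val_zero,
      Matrix.cons_val_one, Matrix.head_cons, Matrix.vecHead, Matrix.vecTail]
    ring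
  refine ⟨key, ?_⟩
  rw [key]
  constructor <;> intro h <;> linarith
end

section
/- The null decomposition of the wave operator for time-independent data along a single derivative: for the acoustical metric on ℝ⁴ and a C² function φ, the identity □_g φ = −c⁻²B²(φ) + c⁻²(∇_B B)(φ) + Δφ − c⁻²(div v)·B(φ) holds, where □_g φ = (1/√|det g|)∂_μ(√|det g| g^{μν}∂_ν φ), B = ∂_t + v·∇, and Δ is the Euclidean spatial Laplacian; here ∇_B B = c⁻¹B(c)B + cΣᵢ∂ᵢ(c)∂ᵢ, so that □_g φ = −c⁻²B²(φ) + c⁻³B(c)B(φ) + c⁻¹∇c·∇φ + Δφ − c⁻²(div v)B(φ). -/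
noncomputable def pd4 (μ : Fin 4) (f : (Fin 4 → ℝ) → ℝ) (x : Fin 4 → ℝ) : ℝ :=
  fderiv ℝ f x (Pi.single μ 1)

/-- Material derivative B = ∂ₜ + Σᵢ vⁱ ∂ᵢ. -/
noncomputable def matD (v : Fin 3 → (Fin 4 → ℝ) → ℝ) (f : (Fin 4 → ℝ) → ℝ)
    (x : Fin 4 → ℝ) : ℝ :=
  pd4 0 f x + ∑ i : Fin 3, v i x * pd4 i.succ f x

noncomputable def divv (v : Fin 3 → (Fin 4 → ℝ) → ℝ) (x : Fin 4 → ℝ) : ℝ :=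
  ∑ i : Fin 3, pd4 i.succ (v i) x

/-- The inverse acoustical metric as a matrix-valued field. -/
noncomputable def ginvF (c : (Fin 4 → ℝ) → ℝ) (v : Fin 3 → (Fin 4 → ℝ) → ℝ)
    (y : Fin 4 → ℝ) : Matrix (Fin 4) (Fin 4) ℝ :=
  !![-1/(c y)^2, -v 0 y/(c y)^2, -v 1 y/(c y)^2, -v 2 y/(c y)^2;
     -v 0 y/(c y)^2, 1 - v 0 y*v 0 y/(c y)^2, -(v 0 y*v 1 y)/(c y)^2, -(v 0 y*v 2 y)/(c y)^2;
     -v 1 y/(c y)^2, -(v 1 y*v 0 y)/(c y)^2, 1 - v 1 y*v 1 y/(c y)^2, -(v 1 y*v 2 y)/(c y)^2;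
     -v 2 y/(c y)^2, -(v 2 y*v 0 y)/(c y)^2, -(v 2 y*v 1 y)/(c y)^2, 1 - v 2 y*v 2 y/(c y)^2]

/-- Laplace–Beltrami operator of the acoustical metric in Cartesian coordinates,
using √|det g| = c. -/
noncomputable def boxg (c : (Fin 4 → ℝ) → ℝ) (v : Fin 3 → (Fin 4 → ℝ) → ℝ)
    (φ : (Fin 4 → ℝ) → ℝ) (x : Fin 4 → ℝ) : ℝ :=
  (1 / c x) * ∑ μ : Fin 4,
    pd4 μ (fun y => c y * ∑ ν : Fin 4, ginvF c v y μ ν * pd4 ν φ y) x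

section aux

lemma pd4_mul {f g : (Fin 4 → ℝ) → ℝ} {x} (μ : Fin 4)
    (hf : DifferentiableAt ℝ f x) (hg : DifferentiableAt ℝ g x) :
    pd4 μ (fun y => f y * g y) x = pd4 μ f x * g x + f x * pd4 μ g x := by
  simp only [pd4, show (fun y => f y * g y) = f * g from rfl, fderiv_mul hf hg, ContinuousLinearMap.add_apply,
    ContinuousLinearMap.smul_apply, smul_eq_mul]
  ring

lemma pd4_inv {c : (Fin 4 → ℝ) → ℝ} {x} (μ : Fin 4)
    (hc : DifferentiableAt ℝ c x) (hne : c x ≠ 0) :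
    pd4 μ (fun y => (c y)⁻¹) x = -(pd4 μ c x) / (c x)^2 := by
  have h := ((hasFDerivAt_inv hne).comp x hc.hasFDerivAt).fderiv
  simp only [pd4, Function.comp_def] at h ⊢
  rw [h]
  simp [ContinuousLinearMap.smulRight_apply]
  ring

lemma pd4_neg {f : (Fin 4 → ℝ) → ℝ} {x} (μ : Fin 4) :
    pd4 μ (fun y => -(f y)) x = -pd4 μ f x := by
  simp [pd4, fderiv_neg]

lemma pd4_add {f g : (Fin 4 → ℝ) → ℝ} {x} (μ : Fin 4)
    (hf : DifferentiableAt ℝ f x) (hg : DifferentiableAt ℝ g x) :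
    pd4 μ (fun y => f y + g y) x = pd4 μ f x + pd4 μ g x := by
  simp only [pd4, show (fun y => f y + g y) = f + g from rfl, fderiv_add hf hg,
    ContinuousLinearMap.add_apply]

lemma row0_deriv (c F : (Fin 4 → ℝ) → ℝ) {x} (μ : Fin 4)
    (hc : DifferentiableAt ℝ c x) (hF : DifferentiableAt ℝ F x) (hne : c x ≠ 0) :
    pd4 μ (fun y => -((c y)⁻¹ * F y)) x
      = pd4 μ c x / (c x)^2 * F x - (c x)⁻¹ * pd4 μ F x := by
  rw [show (fun y => -((c y)⁻¹ * F y)) = fun y => -((fun z => (c z)⁻¹ * F z) y) from rfl,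
    pd4_neg, pd4_mul (f := fun z => (c z)⁻¹) (g := F) μ (hc.inv hne) hF, pd4_inv μ hc hne]
  ring

lemma rowi_deriv (c w F G : (Fin 4 → ℝ) → ℝ) {x} (μ : Fin 4)
    (hc : DifferentiableAt ℝ c x) (hw : DifferentiableAt ℝ w x)
    (hF : DifferentiableAt ℝ F x) (hG : DifferentiableAt ℝ G x) (hne : c x ≠ 0) :
    pd4 μ (fun y => -((c y)⁻¹ * (w y * F y)) + c y * G y) x
      = pd4 μ c x / (c x)^2 * (w x * F x)
        - (c x)⁻¹ * (pd4 μ w x * F x + w x * pd4 μ F x)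
        + (pd4 μ c x * G x + c x * pd4 μ G x) := by
  rw [show (fun y => -((c y)⁻¹ * (w y * F y)) + c y * G y)
      = fun y => (fun z => -((fun u => (c u)⁻¹ * (w u * F u)) z)) y + (fun z => c z * G z) y from rfl,
    pd4_add (f := fun z => -((fun u => (c u)⁻¹ * (w u * F u)) z)) (g := fun z => c z * G z) μ (((hc.inv hne).mul (hw.mul hF)).neg) (hc.mul hG),
    pd4_neg,
    show (fun u => (c u)⁻¹ * (w u * F u)) = fun u => (fun z => (c z)⁻¹) u * ((fun z => w z * F z) u) from rfl,
    pd4_mul (f := fun z => (c z)⁻¹) (g := fun z => w z * F z) μ (hc.inv hne) (hw.mul hF), pd4_mul μ hw hF, pd4_inv μ hc hne,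
    pd4_mul μ hc hG]
  ring

end aux

/-- null-frame-free decomposition of the acoustical wave operator:
□_g φ = -c⁻²B²(φ) + c⁻³B(c)B(φ) + c⁻¹∇c·∇φ + Δφ - c⁻²(div v)B(φ). -/
theorem acoustical_wave_operator_decomposition
    (c : (Fin 4 → ℝ) → ℝ) (v : Fin 3 → (Fin 4 → ℝ) → ℝ) (φ : (Fin 4 → ℝ) → ℝ)
    (hc : ContDiff ℝ 1 c) (hv : ∀ i, ContDiff ℝ 1 (v i)) (hφ : ContDiff ℝ 2 φ)
    (hcpos : ∀ x, 0 < c x) :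
    ∀ x, boxg c v φ x
      = -(1/(c x)^2) * matD v (matD v φ) x
        + (1/(c x)^3) * matD v c x * matD v φ x
        + (1/(c x)) * (∑ i : Fin 3, pd4 i.succ c x * pd4 i.succ φ x)
        + (∑ i : Fin 3, pd4 i.succ (pd4 i.succ φ) x)
        - (1/(c x)^2) * divv v x * matD v φ x := by
  intro x
  have hcne : ∀ y, c y ≠ 0 := fun y => (hcpos y).ne'
  have dc : Differentiable ℝ c := hc.differentiable one_ne_zero
  have dv : ∀ i, Differentiable ℝ (v i) := fun i => (hv i).differentiable one_ne_zero
  have dφ : ∀ ν : Fin 4, Differentiable ℝ (pd4 ν φ) := fun ν =>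
    (((hφ.fderiv_right (m := 1) (by norm_num)).clm_apply contDiff_const).differentiable one_ne_zero)
  have dF : Differentiable ℝ (matD v φ) := by
    unfold matD
    exact (dφ 0).add (Differentiable.fun_sum fun i _ => (dv i).mul (dφ i.succ))
  have e0 : (Fin.succ (0:Fin 3)) = (1:Fin 4) := rfl
  have e1 : (Fin.succ (1:Fin 3)) = (2:Fin 4) := rfl
  have e2 : (Fin.succ (2:Fin 3)) = (3:Fin 4) := rfl
  have h0eq : (fun y => c y * ∑ ν : Fin 4, ginvF c v y 0 ν * pd4 ν φ y)
      = fun y => -((c y)⁻¹ * matD v φ y) := by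
    funext y
    simp only [ginvF, matD, Fin.sum_univ_four, Fin.sum_univ_three,
      Matrix.cons_val', Matrix.cons_val_zero, Matrix.cons_val_one, Matrix.head_cons,
      Matrix.empty_val', Matrix.cons_val_fin_one, Matrix.head_fin_const, Matrix.of_apply,
      Matrix.cons_val_two, Matrix.cons_val_three, Matrix.tail_cons, e0, e1, e2]
    have h := hcne y
    field_simp
    ring
  have h1eq : (fun y => c y * ∑ ν : Fin 4, ginvF c v y 1 ν * pd4 ν φ y)
      = fun y => -((c y)⁻¹ * (v 0 y * matD v φ y)) + c y * pd4 1 φ y := by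
    funext y
    simp only [ginvF, matD, Fin.sum_univ_four, Fin.sum_univ_three,
      Matrix.cons_val', Matrix.cons_val_zero, Matrix.cons_val_one, Matrix.head_cons,
      Matrix.empty_val', Matrix.cons_val_fin_one, Matrix.head_fin_const, Matrix.of_apply,
      Matrix.cons_val_two, Matrix.cons_val_three, Matrix.tail_cons, e0, e1, e2]
    have h := hcne y
    field_simp
    ring
  have h2eq : (fun y => c y * ∑ ν : Fin 4, ginvF c v y 2 ν * pd4 ν φ y)
      = fun y => -((c y)⁻¹ * (v 1 y * matD v φ y)) + c y * pd4 2 φ y := by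
    funext y
    simp only [ginvF, matD, Fin.sum_univ_four, Fin.sum_univ_three,
      Matrix.cons_val', Matrix.cons_val_zero, Matrix.cons_val_one, Matrix.head_cons,
      Matrix.empty_val', Matrix.cons_val_fin_one, Matrix.head_fin_const, Matrix.of_apply,
      Matrix.cons_val_two, Matrix.cons_val_three, Matrix.tail_cons, e0, e1, e2]
    have h := hcne y
    field_simp
    ring
  have h3eq : (fun y => c y * ∑ ν : Fin 4, ginvF c v y 3 ν * pd4 ν φ y)
      = fun y => -((c y)⁻¹ * (v 2 y * matD v φ y)) + c y * pd4 3 φ y := by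
    funext y
    simp only [ginvF, matD, Fin.sum_univ_four, Fin.sum_univ_three,
      Matrix.cons_val', Matrix.cons_val_zero, Matrix.cons_val_one, Matrix.head_cons,
      Matrix.empty_val', Matrix.cons_val_fin_one, Matrix.head_fin_const, Matrix.of_apply,
      Matrix.cons_val_two, Matrix.cons_val_three, Matrix.tail_cons, e0, e1, e2]
    have h := hcne y
    field_simp
    ring
  unfold boxg
  rw [Fin.sum_univ_four, h0eq, h1eq, h2eq, h3eq,
    row0_deriv c (matD v φ) 0 (dc x) (dF x) (hcne x),
    rowi_deriv c (v 0) (matD v φ) (pd4 1 φ) 1 (dc x) (dv 0 x) (dF x) (dφ 1 x) (hcne x),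
    rowi_deriv c (v 1) (matD v φ) (pd4 2 φ) 2 (dc x) (dv 1 x) (dF x) (dφ 2 x) (hcne x),
    rowi_deriv c (v 2) (matD v φ) (pd4 3 φ) 3 (dc x) (dv 2 x) (dF x) (dφ 3 x) (hcne x)]
  simp only [matD, divv, Fin.sum_univ_three, e0, e1, e2]
  have h := hcne x
  field_simp
  ring
end
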